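/- Let m ≥ 2 be an integer, let p ∈ (0,1) satisfy (1-p)^4 = (m-1)^4 p^3, and let f(q) = 2·(H₂(q) + (1-q)·log₂(m-1))/(q+3). Then f is differentiable at p and its derivative at p equals 0 (i.e., p is a critical point of f). -/

import Mathlib

/-- The binary entropy function in bits, with the convention `0 · log₂ 0 = 0`. -/
noncomputable def binEnt (x : ℝ) : ℝ :=
  -x * Real.logb 2 x - (1 - x) * Real.logb 2 (1 - x)

/-- Let `m ≥ 2` be an integer, `p ∈ (0,1)` with `(1-p)^4 = (m-1)^4 p^3`,
and `f(q) = 2(H₂(q) + (1-q)log₂(m-1))/(q+3)`. Then `f` is differentiable at `p` and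
its derivative at `p` equals `0`. -/
theorem capacity_critical_point (m : ℤ) (hm : 2 ≤ m) (p : ℝ)
    (hp : p ∈ Set.Ioo (0 : ℝ) 1)
    (hroot : (1 - p) ^ 4 = ((m : ℝ) - 1) ^ 4 * p ^ 3) :
    DifferentiableAt ℝ
      (fun q : ℝ => 2 * (binEnt q + (1 - q) * Real.logb 2 ((m : ℝ) - 1)) / (q + 3)) p ∧
    deriv
      (fun q : ℝ => 2 * (binEnt q + (1 - q) * Real.logb 2 ((m : ℝ) - 1)) / (q + 3)) p
      = 0 := by
  obtain ⟨hp0, hp1⟩ := hp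
  have hp1' : (0:ℝ) < 1 - p := by linarith
  have hm1 : (1:ℝ) ≤ (m:ℝ) - 1 := by
    have : (2:ℝ) ≤ (m:ℝ) := by exact_mod_cast hm
    linarith
  have hm0 : (0:ℝ) < (m:ℝ) - 1 := by linarith
  have hlog2 : Real.log 2 ≠ 0 := ne_of_gt (Real.log_pos (by norm_num))
  have hlog : 4 * Real.log (1 - p) = 4 * Real.log ((m:ℝ) - 1) + 3 * Real.log p := by
    have h := congrArg Real.log hroot
    rw [Real.log_pow, Real.log_mul (by positivity) (by positivity),
      Real.log_pow, Real.log_pow] at h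
    push_cast at h
    linarith
  have hfun : binEnt = fun q : ℝ => (-(q * Real.log q) - (1-q) * Real.log (1-q)) / Real.log 2 := by
    funext q
    simp only [binEnt, Real.logb]
    ring
  have hB : HasDerivAt binEnt ((Real.log (1-p) - Real.log p) / Real.log 2) p := by
    rw [hfun]
    have h1 : HasDerivAt (fun q : ℝ => q * Real.log q) (Real.log p + 1) p :=
      Real.hasDerivAt_mul_log (ne_of_gt hp0)
    have h2 : HasDerivAt (fun q : ℝ => (1-q) * Real.log (1-q)) (-(Real.log (1-p) + 1)) p := by
      have h3 : HasDerivAt (fun q : ℝ => 1 - q) (-1 : ℝ) p := by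
        simpa using (hasDerivAt_id p).const_sub 1
      have := (Real.hasDerivAt_mul_log (ne_of_gt hp1')).comp p h3
      exact this.congr_deriv (by ring)
    have := (h1.neg.sub h2).div_const (Real.log 2)
    exact this.congr_deriv (by ring)
  set c := Real.logb 2 ((m:ℝ)-1) with hc
  have hnum : HasDerivAt (fun q : ℝ => 2 * (binEnt q + (1 - q) * c))
      (2 * ((Real.log (1-p) - Real.log p) / Real.log 2 - c)) p := by
    have h3 : HasDerivAt (fun q : ℝ => (1 - q) * c) (-c) p := by
      have : HasDerivAt (fun q : ℝ => 1 - q) (-1 : ℝ) p := by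
        simpa using (hasDerivAt_id p).const_sub 1
      simpa using this.mul_const c
    have := (hB.add h3).const_mul 2
    exact this.congr_deriv (by ring)
  have hden : HasDerivAt (fun q : ℝ => q + 3) 1 p := by
    simpa using (hasDerivAt_id p).add_const 3
  have hp3 : p + 3 ≠ 0 := by linarith
  have hF : HasDerivAt (fun q : ℝ => 2 * (binEnt q + (1 - q) * c) / (q + 3)) _ p := hnum.div hden hp3
  refine ⟨hF.differentiableAt, ?_⟩
  rw [hF.deriv]
  rw [div_eq_zero_iff]
  left
  have hbp : binEnt p = (-(p * Real.log p) - (1-p) * Real.log (1-p)) / Real.log 2 := by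
    rw [hfun]
  rw [hbp, hc, Real.logb]
  field_simp
  linear_combination (2 : ℝ) * hlog
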